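/- Diminishing asymptotic rate of change (deterministic core of Lemma 1). Let ψ : ℕ → ℝ^d be a sequence satisfying lim_{n→∞} α(n)·‖∑_{i=0}^{n} ψ(i)‖ = 0. Then the weighted sums of ψ over time windows have zero asymptotic rate of change: for every τ > 0, limsup_{n→∞} sup_{−τ ≤ t₁ ≤ t₂ ≤ τ} ‖∑_{i=m(t(n)+t₁)}^{m(t(n)+t₂)−1} α(i)·ψ(i)‖ = 0. (In the paper this is applied with ψ(i) = H(x, Y_{i+1}) − h(x), ψ(i) = L_b(Y_{i+1}) − L̄_b, and ψ(i) = L(Y_{i+1}) − L̄, on a sample path satisfying the strong-law condition of Assumption 6.) -/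
import Mathlib


open Filter

theorem diminishing_asymptotic_rate_of_change
    {E : Type*} [NormedAddCommGroup E] [NormedSpace ℝ E] [FiniteDimensional ℝ E]
    [Nontrivial E]
    (α : ℕ → ℝ)
    (hα_pos : ∀ n, 0 < α n)
    (hα_anti : ∀ n, α (n + 1) ≤ α n)
    (hα_div : Tendsto (fun n => ∑ i ∈ Finset.range n, α i) atTop atTop)
    (hα_to0 : Tendsto α atTop (nhds 0))
    (Cα : ℝ) (hCα_pos : 0 < Cα)
    (hCα : ∀ n, α n - α (n + 1) ≤ Cα * α n ^ 2)
    (t : ℕ → ℝ) (ht : ∀ n, t n = ∑ i ∈ Finset.range n, α i)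
    (m : ℝ → ℕ)
    (hm_le : ∀ s : ℝ, 0 ≤ s → t (m s) ≤ s)
    (hm_max : ∀ s : ℝ, 0 ≤ s → ∀ i : ℕ, t i ≤ s → i ≤ m s)
    (hm_neg : ∀ s : ℝ, s < 0 → m s = 0)
    (ψ : ℕ → E)
    (hψ : Tendsto (fun n => α n * ‖∑ i ∈ Finset.range (n + 1), ψ i‖) atTop (nhds 0)) :
    ∀ τ : ℝ, 0 < τ → ∀ ε : ℝ, 0 < ε → ∃ N : ℕ, ∀ n ≥ N,
      ∀ t₁ t₂ : ℝ, -τ ≤ t₁ → t₁ ≤ t₂ → t₂ ≤ τ →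
        ‖∑ i ∈ Finset.Ico (m (t n + t₁)) (m (t n + t₂)), α i • ψ i‖ ≤ ε := by
  intro τ hτ ε hε
  set g : ℕ → E := fun k => ∑ i ∈ Finset.range k, ψ i with hg
  have hα_mono : Antitone α := antitone_nat_of_succ_le hα_anti
  have ht_nonneg : ∀ k, 0 ≤ t k := by
    intro k; rw [ht]
    exact Finset.sum_nonneg fun i _ => (hα_pos i).le
  set D : ℝ := 2 + Cα * (2 * τ + α 0) with hD
  have hD_pos : 0 < D := by
    have := hα_pos 0
    have : 0 < 2 * τ + α 0 := by linarith
    nlinarith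
  set δ : ℝ := ε / D with hδ
  have hδ_pos : 0 < δ := div_pos hε hD_pos
  have h1 : ∀ᶠ i in atTop, α i * ‖g (i + 1)‖ < δ :=
    hψ.eventually (gt_mem_nhds hδ_pos)
  obtain ⟨N₁, hN₁⟩ := eventually_atTop.mp h1
  have htend : Tendsto t atTop atTop := by
    have : t = fun n => ∑ i ∈ Finset.range n, α i := funext ht
    rw [this]; exact hα_div
  obtain ⟨N₂, hN₂⟩ := eventually_atTop.mp (htend.eventually_ge_atTop (τ + t (N₁ + 1)))
  refine ⟨N₂, fun n hn t₁ t₂ h1' h12 h2' => ?_⟩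
  have hs₁ : t (N₁ + 1) ≤ t n + t₁ := by
    have := hN₂ n hn; linarith
  have hs₁0 : (0 : ℝ) ≤ t n + t₁ := le_trans (ht_nonneg _) hs₁
  have hs₂0 : (0 : ℝ) ≤ t n + t₂ := by linarith
  set a := m (t n + t₁) with ha_def
  set b := m (t n + t₂) with hb_def
  have ha : N₁ + 1 ≤ a := hm_max _ hs₁0 _ hs₁
  by_cases hab : b ≤ a
  · rw [Finset.Ico_eq_empty (not_lt.mpr hab), Finset.sum_empty, norm_zero]
    exact hε.le
  push_neg at hab
  -- key bound on the tail terms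
  have key : ∀ i, N₁ ≤ i → α i * ‖g (i + 1)‖ ≤ δ := fun i hi => (hN₁ i hi).le
  -- sum of α over the window
  have hsum_ab : ∑ i ∈ Finset.Ico a b, α i = t b - t a := by
    rw [ht, ht, Finset.sum_Ico_eq_sub _ hab.le]
  have htb : t b ≤ t n + t₂ := hm_le _ hs₂0
  have hta : t n + t₁ - α a < t a := by
    have h' : ¬ t (a + 1) ≤ t n + t₁ := by
      intro h
      have := hm_max _ hs₁0 (a + 1) h
      omega
    push_neg at h'
    have hsucc : t (a + 1) = t a + α a := by
      rw [ht, ht, Finset.sum_range_succ]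
    linarith
  have hsum_bound : ∑ i ∈ Finset.Ico a b, α i ≤ 2 * τ + α 0 := by
    have hα0 : α a ≤ α 0 := hα_mono (Nat.zero_le a)
    rw [hsum_ab]; linarith
  -- Abel summation
  have habel := Finset.sum_Ico_by_parts α ψ hab
  rw [habel]
  have hnormα : ∀ k, ‖α k‖ = α k := fun k => Real.norm_of_nonneg (hα_pos k).le
  -- term 1
  have term1 : ‖α (b - 1) • g b‖ ≤ δ := by
    have hb1 : b = (b - 1) + 1 := by omega
    rw [norm_smul, hnormα]
    calc α (b - 1) * ‖g b‖ = α (b - 1) * ‖g ((b - 1) + 1)‖ := by rw [← hb1]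
    _ ≤ δ := key _ (by omega)
  -- term 2
  have term2 : ‖α a • g a‖ ≤ δ := by
    have ha1 : a = (a - 1) + 1 := by omega
    rw [norm_smul, hnormα]
    calc α a * ‖g a‖ ≤ α (a - 1) * ‖g ((a - 1) + 1)‖ := by
          rw [← ha1]
          exact mul_le_mul_of_nonneg_right (hα_mono (by omega)) (norm_nonneg _)
    _ ≤ δ := key _ (by omega)
  -- term 3
  have term3 : ‖∑ i ∈ Finset.Ico a (b - 1), (α (i + 1) - α i) • g (i + 1)‖
      ≤ Cα * δ * (2 * τ + α 0) := by
    calc ‖∑ i ∈ Finset.Ico a (b - 1), (α (i + 1) - α i) • g (i + 1)‖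
        ≤ ∑ i ∈ Finset.Ico a (b - 1), ‖(α (i + 1) - α i) • g (i + 1)‖ :=
          norm_sum_le _ _
      _ ≤ ∑ i ∈ Finset.Ico a (b - 1), Cα * δ * α i := by
          apply Finset.sum_le_sum
          intro i hi
          have hiN : N₁ ≤ i := by
            have := (Finset.mem_Ico.mp hi).1; omega
          rw [norm_smul, Real.norm_eq_abs, abs_of_nonpos (by linarith [hα_anti i])]
          have h1 : α i - α (i + 1) ≤ Cα * α i ^ 2 := hCα i
          have h2 : α i * ‖g (i + 1)‖ ≤ δ := key i hiN
          have hgn : (0 : ℝ) ≤ ‖g (i + 1)‖ := norm_nonneg _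
          have hαi := (hα_pos i).le
          nlinarith [mul_le_mul_of_nonneg_right h1 hgn,
            mul_le_mul_of_nonneg_left h2 (mul_nonneg hCα_pos.le hαi)]
      _ = Cα * δ * ∑ i ∈ Finset.Ico a (b - 1), α i := by
          rw [Finset.mul_sum]
      _ ≤ Cα * δ * (2 * τ + α 0) := by
          apply mul_le_mul_of_nonneg_left _ (by positivity)
          calc ∑ i ∈ Finset.Ico a (b - 1), α i ≤ ∑ i ∈ Finset.Ico a b, α i := by
                apply Finset.sum_le_sum_of_subset_of_nonneg
                · exact Finset.Ico_subset_Ico le_rfl (by omega)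
                · intro i _ _; exact (hα_pos i).le
          _ ≤ 2 * τ + α 0 := hsum_bound
  calc ‖α (b - 1) • g b - α a • g a
        - ∑ i ∈ Finset.Ico a (b - 1), (α (i + 1) - α i) • g (i + 1)‖
      ≤ ‖α (b - 1) • g b - α a • g a‖
        + ‖∑ i ∈ Finset.Ico a (b - 1), (α (i + 1) - α i) • g (i + 1)‖ := norm_sub_le _ _
    _ ≤ ‖α (b - 1) • g b‖ + ‖α a • g a‖
        + ‖∑ i ∈ Finset.Ico a (b - 1), (α (i + 1) - α i) • g (i + 1)‖ := by
          have := norm_sub_le (α (b - 1) • g b) (α a • g a)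
          linarith
    _ ≤ δ + δ + Cα * δ * (2 * τ + α 0) := by linarith
    _ = δ * D := by rw [hD]; ring
    _ = ε := by rw [hδ, div_mul_cancel₀ _ (ne_of_gt hD_pos)]
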